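/- arXiv:1210.3880 — 2 statements merged into one kernel-verified Lean document; each statement's English description precedes it below -/
import Mathlib

section
/- There exists an absolute constant C > 0 such that for every real K ≥ 3 and every integer k with 1 ≤ k ≤ K, one has ∏_{ℓ | k, ℓ prime, ℓ > √(log K)} (1 + 1/ℓ) ≤ C. -/
open scoped Classical

open Finset

private lemma cheb' (n : ℕ) :
    ∑ p ∈ (Finset.range n).filter Nat.Prime, Real.log p ≤ n * Real.log 4 := by
  rcases Nat.eq_zero_or_pos n with h | h
  · simp [h]
  obtain ⟨m, rfl⟩ : ∃ m, n = m + 1 := ⟨n - 1, (Nat.succ_pred_eq_of_pos h).symm⟩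
  have h1 : ∑ p ∈ (Finset.range (m+1)).filter Nat.Prime, Real.log p
      = Real.log (primorial m) := by
    rw [primorial, Nat.cast_prod, Real.log_prod]
    intro p hp
    exact_mod_cast (Nat.Prime.pos (Finset.mem_filter.1 hp).2).ne'
  rw [h1]
  calc Real.log (primorial m) ≤ Real.log ((4:ℝ) ^ m) := by
        apply Real.log_le_log (by exact_mod_cast primorial_pos _)
        exact_mod_cast primorial_le_4_pow m
    _ = m * Real.log 4 := by rw [Real.log_pow]
    _ ≤ ((m+1:ℕ)) * Real.log 4 := by
        apply mul_le_mul_of_nonneg_right _ (Real.log_nonneg (by norm_num))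
        · push_cast; linarith

private lemma blockSum' {j : ℕ} (hj : 1 ≤ j) :
    ∑ ℓ ∈ (Finset.Ico (2^j) (2^(j+1))).filter Nat.Prime, (1 / (ℓ:ℝ)) ≤ 4 / j := by
  have hlog2 : (0:ℝ) < Real.log 2 := Real.log_pos (by norm_num)
  have hjpos : (0:ℝ) < j := by exact_mod_cast hj
  have key : ∀ ℓ ∈ (Finset.Ico (2^j) (2^(j+1))).filter Nat.Prime,
      (1 / (ℓ:ℝ)) ≤ Real.log ℓ / (2^j * (j * Real.log 2)) := by
    intro ℓ hℓ
    obtain ⟨hmem, hp⟩ := Finset.mem_filter.1 hℓ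
    obtain ⟨h1, h2⟩ := Finset.mem_Ico.1 hmem
    have hℓR : (2:ℝ)^j ≤ ℓ := by exact_mod_cast h1
    have hℓpos : (0:ℝ) < ℓ := lt_of_lt_of_le (by positivity) hℓR
    have hlogℓ : j * Real.log 2 ≤ Real.log ℓ := by
      calc (j:ℝ) * Real.log 2 = Real.log ((2:ℝ)^j) := by rw [Real.log_pow]
        _ ≤ Real.log ℓ := Real.log_le_log (by positivity) hℓR
    rw [div_le_div_iff₀ hℓpos (by positivity), one_mul]
    calc (2:ℝ)^j * (j * Real.log 2) ≤ ℓ * Real.log ℓ := by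
          apply mul_le_mul hℓR hlogℓ (by positivity) (le_of_lt hℓpos)
      _ = Real.log ℓ * ℓ := mul_comm _ _
  calc ∑ ℓ ∈ (Finset.Ico (2^j) (2^(j+1))).filter Nat.Prime, (1 / (ℓ:ℝ))
      ≤ ∑ ℓ ∈ (Finset.Ico (2^j) (2^(j+1))).filter Nat.Prime,
          Real.log ℓ / (2^j * (j * Real.log 2)) := Finset.sum_le_sum key
    _ = (∑ ℓ ∈ (Finset.Ico (2^j) (2^(j+1))).filter Nat.Prime, Real.log ℓ)
          / (2^j * (j * Real.log 2)) := by rw [Finset.sum_div]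
    _ ≤ (2^(j+1) * Real.log 4) / (2^j * (j * Real.log 2)) := by
        apply div_le_div_of_nonneg_right _ (by positivity)
        calc ∑ ℓ ∈ (Finset.Ico (2^j) (2^(j+1))).filter Nat.Prime, Real.log ℓ
            ≤ ∑ ℓ ∈ (Finset.range (2^(j+1))).filter Nat.Prime, Real.log ℓ := by
              apply Finset.sum_le_sum_of_subset_of_nonneg
              · intro x hx
                obtain ⟨hm, hp⟩ := Finset.mem_filter.1 hx
                exact Finset.mem_filter.2 ⟨Finset.mem_range.2 (Finset.mem_Ico.1 hm).2, hp⟩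
              · intro x hx _
                exact Real.log_nonneg (by exact_mod_cast (Finset.mem_filter.1 hx).2.one_lt.le)
          _ ≤ 2^(j+1) * Real.log 4 := by exact_mod_cast cheb' (2^(j+1))
    _ = 4 / j := by
        rw [show (4:ℝ) = 2^2 by norm_num, Real.log_pow]
        field_simp
        ring

private lemma rangeSum' {s : ℕ} (hs : 2 ≤ s) :
    ∑ ℓ ∈ (Finset.Ico s (s^2)).filter Nat.Prime, (1/(ℓ:ℝ)) ≤ 12 := by
  set j₀ := Nat.log 2 s with hj₀def
  have hj₀ : 1 ≤ j₀ := Nat.log_pos (by norm_num) hs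
  have hcover : (Finset.Ico s (s^2)).filter Nat.Prime ⊆
      (Finset.Icc j₀ (2*j₀+1)).biUnion
        (fun j => (Finset.Ico (2^j) (2^(j+1))).filter Nat.Prime) := by
    intro ℓ hℓ
    obtain ⟨hm, hp⟩ := Finset.mem_filter.1 hℓ
    obtain ⟨h1, h2⟩ := Finset.mem_Ico.1 hm
    have hℓpos : ℓ ≠ 0 := by omega
    refine Finset.mem_biUnion.2 ⟨Nat.log 2 ℓ, ?_, ?_⟩
    · refine Finset.mem_Icc.2 ⟨Nat.log_mono_right h1, ?_⟩
      have hslt : s < 2^(j₀+1) := Nat.lt_pow_succ_log_self (by norm_num) s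
      have : ℓ < 2^(2*j₀+2) := by
        calc ℓ < s^2 := h2
          _ ≤ (2^(j₀+1))^2 := Nat.pow_le_pow_left hslt.le 2
          _ = 2^(2*j₀+2) := by ring
      have := Nat.log_lt_of_lt_pow hℓpos this
      omega
    · exact Finset.mem_filter.2 ⟨Finset.mem_Ico.2
        ⟨Nat.pow_log_le_self 2 hℓpos, Nat.lt_pow_succ_log_self (by norm_num) ℓ⟩, hp⟩
  have hdisj : (↑(Finset.Icc j₀ (2*j₀+1)) : Set ℕ).PairwiseDisjoint
      (fun j => (Finset.Ico (2^j) (2^(j+1))).filter Nat.Prime) := by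
    have key : ∀ j j' : ℕ, j < j' →
        Disjoint ((Finset.Ico (2^j) (2^(j+1))).filter Nat.Prime)
          ((Finset.Ico (2^j') (2^(j'+1))).filter Nat.Prime) := by
      intro j j' hlt
      rw [Finset.disjoint_left]
      intro x hx hx'
      have h1 : x < 2^(j+1) := (Finset.mem_Ico.1 (Finset.mem_filter.1 hx).1).2
      have h2 : 2^j' ≤ x := (Finset.mem_Ico.1 (Finset.mem_filter.1 hx').1).1
      have : (2:ℕ)^(j+1) ≤ 2^j' := Nat.pow_le_pow_right (by norm_num) hlt
      omega
    intro j _ j' _ hne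
    rcases hne.lt_or_gt with h | h
    · exact key j j' h
    · exact (key j' j h).symm
  calc ∑ ℓ ∈ (Finset.Ico s (s^2)).filter Nat.Prime, (1/(ℓ:ℝ))
      ≤ ∑ ℓ ∈ (Finset.Icc j₀ (2*j₀+1)).biUnion
          (fun j => (Finset.Ico (2^j) (2^(j+1))).filter Nat.Prime), (1/(ℓ:ℝ)) := by
        apply Finset.sum_le_sum_of_subset_of_nonneg hcover
        intro x _ _; positivity
    _ = ∑ j ∈ Finset.Icc j₀ (2*j₀+1),
          ∑ ℓ ∈ (Finset.Ico (2^j) (2^(j+1))).filter Nat.Prime, (1/(ℓ:ℝ)) :=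
        Finset.sum_biUnion hdisj
    _ ≤ ∑ j ∈ Finset.Icc j₀ (2*j₀+1), (4 / (j₀:ℝ)) := by
        apply Finset.sum_le_sum
        intro j hj
        have hj1 : 1 ≤ j := hj₀.trans (Finset.mem_Icc.1 hj).1
        calc ∑ ℓ ∈ (Finset.Ico (2^j) (2^(j+1))).filter Nat.Prime, (1/(ℓ:ℝ))
            ≤ 4 / j := blockSum' hj1
          _ ≤ 4 / j₀ := by
              apply div_le_div_of_nonneg_left (by norm_num) (by exact_mod_cast hj₀)
              exact_mod_cast (Finset.mem_Icc.1 hj).1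
    _ = (2*j₀+1+1-j₀ : ℕ) • (4 / (j₀:ℝ)) := by rw [Finset.sum_const, Nat.card_Icc]
    _ ≤ 12 := by
        have hcard : 2*j₀+1+1-j₀ = j₀+2 := by omega
        rw [hcard, nsmul_eq_mul]
        rw [div_eq_mul_inv, ← mul_assoc]
        rw [mul_inv_le_iff₀ (by exact_mod_cast hj₀ : (0:ℝ) < j₀)]
        push_cast
        nlinarith [(by exact_mod_cast hj₀ : (1:ℝ) ≤ j₀)]

private lemma cast_filter_prod' (k : ℕ) (y : ℝ) :
    (∏ ℓ ∈ k.primeFactors.filter (fun ℓ => y < (ℓ : ℝ)), (1 + 1 / (ℓ : ℝ)))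
    = ∏ ℓ ∈ (k.primeFactors.filter (fun ℓ : ℕ => y < (ℓ:ℝ))), (1 + 1/(ℓ:ℝ)) := by
  have hset : (k.primeFactors >>= fun a => (pure (a:ℝ) : Finset ℝ))
      = k.primeFactors.image (Nat.cast : ℕ → ℝ) := by
    ext x
    simp [Finset.mem_sup, Finset.bind_def, Finset.pure_def]
  rw [hset, Finset.filter_image, Finset.prod_image]
  intro a _ b _ h
  exact_mod_cast h

/-- For `3 ≤ K` and `1 ≤ k ≤ K`, the product of `1 + 1/ℓ` over the prime divisors `ℓ` of `k`
exceeding `√(log K)` is bounded by an absolute constant. -/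
theorem large_prime_factors_product_bound :
    ∃ C : ℝ, 0 < C ∧ ∀ K : ℝ, 3 ≤ K → ∀ k : ℕ, 1 ≤ k → (k : ℝ) ≤ K →
      (∏ ℓ ∈ k.primeFactors.filter (fun ℓ : ℕ => Real.sqrt (Real.log K) < (ℓ : ℝ)),
        (1 + 1 / (ℓ : ℝ))) ≤ C := by
  have hloglog3 : 0 < Real.log (Real.log 3) := by
    apply Real.log_pos
    rw [Real.lt_log_iff_exp_lt (by norm_num)]
    calc Real.exp 1 < 2.7182818286 := Real.exp_one_lt_d9
      _ < 3 := by norm_num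
  refine ⟨Real.exp (12 + 1 / Real.log (Real.log 3)), Real.exp_pos _, ?_⟩
  intro K hK3 k hk1 hkK
  have hKpos : (0:ℝ) < K := by linarith
  have hlogK : 1 < Real.log K := by
    rw [Real.lt_log_iff_exp_lt hKpos]
    calc Real.exp 1 < 2.7182818286 := Real.exp_one_lt_d9
      _ < 3 := by norm_num
      _ ≤ K := hK3
  have hlogKpos : 0 < Real.log K := by linarith
  have hloglogK : 0 < Real.log (Real.log K) := Real.log_pos hlogK
  have hloglog3K : Real.log (Real.log 3) ≤ Real.log (Real.log K) := by
    apply Real.log_le_log (by apply Real.log_pos; norm_num)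
    exact Real.log_le_log (by norm_num) hK3
  set y := Real.sqrt (Real.log K) with hydef
  have hy0 : 0 ≤ y := Real.sqrt_nonneg _
  have hy1 : 1 < y := by
    rw [hydef, show (1:ℝ) = Real.sqrt 1 by simp]
    exact Real.sqrt_lt_sqrt (by norm_num) hlogK
  have hy2 : y^2 = Real.log K := Real.sq_sqrt hlogKpos.le
  set S : Finset ℕ := k.primeFactors.filter (fun ℓ => y < (ℓ:ℝ)) with hSdef
  have h1 : ∏ ℓ ∈ S, (1 + 1/(ℓ:ℝ)) ≤ Real.exp (∑ ℓ ∈ S, 1/(ℓ:ℝ)) := by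
    rw [Real.exp_sum]
    apply Finset.prod_le_prod
    · intro i _; positivity
    · intro i _
      have := Real.add_one_le_exp (1/(i:ℝ))
      linarith
  refine h1.trans (Real.exp_le_exp.2 ?_)
  rw [← Finset.sum_filter_add_sum_filter_not S (fun ℓ => (ℓ:ℝ) ≤ Real.log K)]
  have hpart1 : ∑ ℓ ∈ S.filter (fun ℓ : ℕ => (ℓ:ℝ) ≤ Real.log K), (1/(ℓ:ℝ)) ≤ 12 := by
    set s := ⌊y⌋₊ + 1 with hsdef
    have hs2 : 2 ≤ s := by
      have : 1 ≤ ⌊y⌋₊ := Nat.le_floor (by exact_mod_cast hy1.le)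
      omega
    have hys : y < (s:ℝ) := by
      rw [hsdef]; push_cast
      exact Nat.lt_floor_add_one y
    have hsub : S.filter (fun ℓ : ℕ => (ℓ:ℝ) ≤ Real.log K) ⊆
        (Finset.Ico s (s^2)).filter Nat.Prime := by
      intro ℓ hℓ
      obtain ⟨hℓS, hℓle⟩ := Finset.mem_filter.1 hℓ
      obtain ⟨hℓpf, hℓy⟩ := Finset.mem_filter.1 hℓS
      have hp : ℓ.Prime := Nat.prime_of_mem_primeFactors hℓpf
      refine Finset.mem_filter.2 ⟨Finset.mem_Ico.2 ⟨?_, ?_⟩, hp⟩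
      · have : (⌊y⌋₊ : ℝ) < ℓ := (Nat.floor_le hy0).trans_lt hℓy
        have : ⌊y⌋₊ < ℓ := by exact_mod_cast this
        omega
      · have ha : (ℓ:ℝ) ≤ y^2 := by rw [hy2]; exact hℓle
        have hb : y^2 < (s:ℝ)^2 := by nlinarith
        have : (ℓ:ℝ) < (s:ℝ)^2 := lt_of_le_of_lt ha hb
        exact_mod_cast this
    calc ∑ ℓ ∈ S.filter (fun ℓ : ℕ => (ℓ:ℝ) ≤ Real.log K), (1/(ℓ:ℝ))
        ≤ ∑ ℓ ∈ (Finset.Ico s (s^2)).filter Nat.Prime, (1/(ℓ:ℝ)) := by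
          apply Finset.sum_le_sum_of_subset_of_nonneg hsub
          intro i _ _; positivity
      _ ≤ 12 := rangeSum' hs2
  have hpart2 : ∑ ℓ ∈ S.filter (fun ℓ : ℕ => ¬ (ℓ:ℝ) ≤ Real.log K), (1/(ℓ:ℝ))
      ≤ 1 / Real.log (Real.log 3) := by
    set T := S.filter (fun ℓ : ℕ => ¬ (ℓ:ℝ) ≤ Real.log K) with hTdef
    have hTsub : T ⊆ k.primeFactors := (Finset.filter_subset _ _).trans (Finset.filter_subset _ _)
    have hTgt : ∀ ℓ ∈ T, Real.log K < (ℓ:ℝ) := by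
      intro ℓ hℓ
      exact not_le.1 (Finset.mem_filter.1 hℓ).2
    have hprodK : ∏ ℓ ∈ T, (ℓ:ℝ) ≤ K := by
      have hdvd : ∏ ℓ ∈ T, ℓ ∣ k :=
        dvd_trans (Finset.prod_dvd_prod_of_subset T k.primeFactors id hTsub)
          k.prod_primeFactors_dvd
      have : ∏ ℓ ∈ T, ℓ ≤ k := Nat.le_of_dvd (by omega) hdvd
      calc ∏ ℓ ∈ T, (ℓ:ℝ) = ((∏ ℓ ∈ T, ℓ : ℕ) : ℝ) := by push_cast; rfl
        _ ≤ (k:ℝ) := by exact_mod_cast this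
        _ ≤ K := hkK
    have hlower : (Real.log K)^(T.card) ≤ ∏ ℓ ∈ T, (ℓ:ℝ) := by
      rw [← Finset.prod_const]
      exact Finset.prod_le_prod (fun i _ => hlogKpos.le) (fun i hi => (hTgt i hi).le)
    have hcard : (T.card : ℝ) * Real.log (Real.log K) ≤ Real.log K := by
      calc (T.card : ℝ) * Real.log (Real.log K) = Real.log ((Real.log K)^(T.card)) := by
            rw [Real.log_pow]
        _ ≤ Real.log K := Real.log_le_log (by positivity) (hlower.trans hprodK)
    have hsum : ∑ ℓ ∈ T, (1/(ℓ:ℝ)) ≤ (T.card : ℝ) * (1 / Real.log K) := by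
      rw [← nsmul_eq_mul]
      apply Finset.sum_le_card_nsmul
      intro ℓ hℓ
      apply one_div_le_one_div_of_le hlogKpos (hTgt ℓ hℓ).le
    calc ∑ ℓ ∈ T, (1/(ℓ:ℝ)) ≤ (T.card : ℝ) * (1 / Real.log K) := hsum
      _ ≤ 1 / Real.log (Real.log K) := by
          rw [mul_one_div, div_le_div_iff₀ hlogKpos hloglogK, one_mul]
          linarith
      _ ≤ 1 / Real.log (Real.log 3) := by
          apply one_div_le_one_div_of_le hloglog3 hloglog3K
  linarith
end

section
/- There exists an absolute constant C > 0 such that for all real numbers D ≥ 1 and z ≥ 1, one has ∑_{1 ≤ d ≤ D} ∏_{2 < ℓ ≤ z, ℓ prime} (1 − ((−d)/ℓ)/ℓ) ≤ C·(D + 2^{π(z)}), where the outer sum is over positive integers d ≤ D. -/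
open scoped Classical
open Finset

private lemma jacobi_abs_le_one (a : ℤ) (b : ℕ) : |jacobiSym a b| ≤ 1 := by
  rcases jacobiSym.trichotomy a b with h | h | h <;> rw [h] <;> norm_num

private lemma jacobi_prod_right (a : ℤ) (t : Finset ℕ) (ht : ∀ n ∈ t, n ≠ 0) :
    jacobiSym a (∏ n ∈ t, n) = ∏ n ∈ t, jacobiSym a n := by
  induction t using Finset.cons_induction with
  | empty => simp [jacobiSym.one_right]
  | cons p t hp ih =>
    have h1 : p ≠ 0 := ht p (Finset.mem_cons_self p t)
    have h2 : (∏ n ∈ t, n) ≠ 0 :=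
      Finset.prod_ne_zero_iff.mpr fun n hn => ht n (Finset.mem_cons_of_mem hn)
    rw [Finset.prod_cons, Finset.prod_cons, jacobiSym.mul_right' a h1 h2,
      ih fun n hn => ht n (Finset.mem_cons_of_mem hn)]

private lemma jacobi_zmod (x : ℤ) (m : ℕ) [NeZero m] :
    jacobiSym x m = jacobiSym (((x : ZMod m)).val : ℤ) m := by
  apply jacobiSym.mod_left'
  rw [ZMod.val_intCast, Int.emod_emod_of_dvd _ dvd_rfl]

private lemma sum_jacobi_prime {p : ℕ} [Fact p.Prime] (hp2 : p ≠ 2) :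
    ∑ x : ZMod p, jacobiSym (x.val : ℤ) p = 0 := by
  have h : ∀ x : ZMod p, jacobiSym (x.val : ℤ) p = quadraticChar (ZMod p) x := by
    intro x
    rw [← jacobiSym.legendreSym.to_jacobiSym]
    show quadraticChar (ZMod p) ((x.val : ℤ) : ZMod p) = quadraticChar (ZMod p) x
    congr 1
    push_cast
    simp [ZMod.natCast_val, ZMod.cast_id]
  simp_rw [h]
  exact quadraticChar_sum_zero (by rw [ZMod.ringChar_zmod_n]; exact hp2)

private lemma sum_jacobi_zmod {n : ℕ} [NeZero n] {t : Finset ℕ} (ht : ∀ q ∈ t, q.Prime ∧ q ≠ 2)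
    (hne : t.Nonempty) (hn : n = ∏ q ∈ t, q) :
    ∑ x : ZMod n, jacobiSym (x.val : ℤ) n = 0 := by
  obtain ⟨p, hp⟩ := hne
  have hpp := (ht p hp).1
  haveI : Fact p.Prime := ⟨hpp⟩
  set m := ∏ q ∈ t.erase p, q with hm
  have hm0 : m ≠ 0 :=
    (Finset.prod_pos fun q hq => (ht q (Finset.mem_of_mem_erase hq)).1.pos).ne'
  have hcop : Nat.Coprime p m := Nat.Coprime.prod_right fun q hq =>
    (Nat.coprime_primes hpp (ht q (Finset.mem_of_mem_erase hq)).1).mpr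
      fun h => (Finset.ne_of_mem_erase hq) h.symm
  have hprod : n = p * m := hn.trans (Finset.mul_prod_erase t _ hp).symm
  subst hprod
  haveI : NeZero p := ⟨hpp.ne_zero⟩
  haveI : NeZero m := ⟨hm0⟩
  haveI : NeZero (p * m) := ⟨mul_ne_zero hpp.ne_zero hm0⟩
  set e := (ZMod.chineseRemainder hcop).toEquiv with he
  have key : ∀ x : ZMod (p * m), jacobiSym (x.val : ℤ) (p * m)
      = jacobiSym ((e x).1.val : ℤ) p * jacobiSym ((e x).2.val : ℤ) m := by
    intro x
    have h0 : e x = (ZMod.cast x : ZMod p × ZMod m) := rfl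
    have he1 : (e x).1 = ((x.val : ℕ) : ZMod p) := by
      rw [h0, Prod.fst_zmod_cast]; exact (ZMod.natCast_val x).symm
    have he2 : (e x).2 = ((x.val : ℕ) : ZMod m) := by
      rw [h0, Prod.snd_zmod_cast]; exact (ZMod.natCast_val x).symm
    have h1 : (((x.val : ℤ)) : ZMod p) = (e x).1 := by rw [he1]; push_cast; rfl
    have h2 : (((x.val : ℤ)) : ZMod m) = (e x).2 := by rw [he2]; push_cast; rfl
    rw [jacobiSym.mul_right' _ hpp.ne_zero hm0]
    congr 1
    · rw [jacobi_zmod (x.val : ℤ) p, h1]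
    · rw [jacobi_zmod (x.val : ℤ) m, h2]
  calc ∑ x : ZMod (p * m), jacobiSym (x.val : ℤ) (p * m)
      = ∑ x : ZMod (p * m), jacobiSym ((e x).1.val : ℤ) p * jacobiSym ((e x).2.val : ℤ) m := by
        exact Fintype.sum_congr _ _ key
    _ = ∑ y : ZMod p × ZMod m, jacobiSym (y.1.val : ℤ) p * jacobiSym (y.2.val : ℤ) m :=
        Equiv.sum_comp e fun y => jacobiSym (y.1.val : ℤ) p * jacobiSym (y.2.val : ℤ) m
    _ = (∑ y1 : ZMod p, jacobiSym (y1.val : ℤ) p) * ∑ y2 : ZMod m, jacobiSym (y2.val : ℤ) m := by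
        rw [Finset.sum_mul_sum, Fintype.sum_prod_type]
    _ = 0 := by rw [sum_jacobi_prime (ht p hp).2, zero_mul]

private lemma jacobi_window {m : ℕ} [NeZero m]
    (hz : ∑ x : ZMod m, jacobiSym (x.val : ℤ) m = 0) (a : ℕ) :
    ∑ d ∈ Finset.Ico a (a + m), jacobiSym (-(d : ℤ)) m = 0 := by
  have hm : 0 < m := Nat.pos_of_ne_zero (NeZero.ne m)
  rw [← hz]
  have hinj : ∀ (d1 : ℕ), d1 ∈ Finset.Ico a (a + m) → ∀ (d2 : ℕ),
      d2 ∈ Finset.Ico a (a + m) →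
      ((-(d1 : ℤ) : ℤ) : ZMod m) = ((-(d2 : ℤ) : ℤ) : ZMod m) → d1 = d2 := by
    intro d1 h1 d2 h2 h
    push_cast at h
    have h' : ((d1 : ℕ) : ZMod m) = ((d2 : ℕ) : ZMod m) := by
      have := neg_inj.mp h
      exact_mod_cast this
    have hmod : d1 ≡ d2 [MOD m] := (ZMod.natCast_eq_natCast_iff _ _ _).mp h'
    simp only [Finset.mem_Ico] at h1 h2
    refine hmod.eq_of_abs_lt ?_
    rw [abs_sub_lt_iff]
    constructor <;> omega
  refine Finset.sum_bij (fun (d : ℕ) _ => ((-(d : ℤ) : ℤ) : ZMod m)) (fun d hd => Finset.mem_univ _)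
    (fun d1 h1 d2 h2 h => hinj d1 h1 d2 h2 h) ?_ ?_
  · have hcard : (Finset.univ : Finset (ZMod m)).card ≤ (Finset.Ico a (a + m)).card := by
      rw [Finset.card_univ, ZMod.card, Nat.card_Ico]
      omega
    intro b hb
    obtain ⟨d, hd, hbd⟩ := Finset.surj_on_of_inj_on_of_card_le
      (fun (d : ℕ) _ => ((-(d : ℤ) : ℤ) : ZMod m)) (fun d hd => Finset.mem_univ _)
      (fun d1 d2 h1 h2 h => hinj d1 h1 d2 h2 h) hcard b hb
    exact ⟨d, hd, hbd.symm⟩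
  · intro d hd
    exact jacobi_zmod _ m

private lemma jacobi_partial_bound {m : ℕ} [NeZero m]
    (hz : ∑ x : ZMod m, jacobiSym (x.val : ℤ) m = 0) (N : ℕ) :
    |∑ d ∈ Finset.Icc 1 N, jacobiSym (-(d : ℤ)) m| ≤ (m : ℤ) := by
  have hm : 0 < m := Nat.pos_of_ne_zero (NeZero.ne m)
  induction N using Nat.strong_induction_on with
  | _ N ih =>
    by_cases hN : N < m
    · calc |∑ d ∈ Finset.Icc 1 N, jacobiSym (-(d : ℤ)) m|
          ≤ ∑ d ∈ Finset.Icc 1 N, |jacobiSym (-(d : ℤ)) m| := Finset.abs_sum_le_sum_abs _ _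
        _ ≤ ∑ _d ∈ Finset.Icc 1 N, 1 :=
            Finset.sum_le_sum fun d _ => jacobi_abs_le_one _ _
        _ = ((Finset.Icc 1 N).card : ℤ) := by simp
        _ ≤ (m : ℤ) := by rw [Nat.card_Icc]; exact_mod_cast (by omega : N + 1 - 1 ≤ m)
    · push_neg at hN
      have hsplit : Finset.Icc 1 N
          = Finset.Icc 1 (N - m) ∪ Finset.Ico (N - m + 1) (N - m + 1 + m) := by
        ext x
        simp only [Finset.mem_Icc, Finset.mem_Ico, Finset.mem_union]
        omega
      have hdisj : Disjoint (Finset.Icc 1 (N - m))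
          (Finset.Ico (N - m + 1) (N - m + 1 + m)) := by
        rw [Finset.disjoint_left]
        intro x hx hx2
        simp only [Finset.mem_Icc, Finset.mem_Ico] at hx hx2
        omega
      rw [hsplit, Finset.sum_union hdisj, jacobi_window hz _, add_zero]
      exact ih (N - m) (by omega)

/-- `∑_{d ≤ D} ∏_{2 < ℓ ≤ z} (1 - ((-d)/ℓ)/ℓ) ≪ D + 2^{π(z)}`, where `((-d)/ℓ)` is the
Legendre symbol at the odd prime `ℓ` (realized via the Jacobi symbol) and `π(z)` is the number
of primes up to `z`. -/
theorem sum_of_products_bound :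
    ∃ C : ℝ, 0 < C ∧ ∀ D z : ℝ, 1 ≤ D → 1 ≤ z →
      (∑ d ∈ Finset.Icc 1 ⌊D⌋₊,
        ∏ ℓ ∈ (Finset.Ioc 2 ⌊z⌋₊).filter Nat.Prime,
          (1 - (jacobiSym (-(d : ℤ)) ℓ : ℝ) / (ℓ : ℝ))) ≤
        C * (D + 2 ^ (Nat.primeCounting ⌊z⌋₊)) := by
  refine ⟨1, one_pos, fun D z hD hz1 => ?_⟩
  set n := ⌊z⌋₊ with hn
  set N := ⌊D⌋₊ with hNdef
  set S := (Finset.Ioc 2 n).filter Nat.Prime with hS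
  have hSfacts : ∀ ℓ ∈ S, ℓ.Prime ∧ 2 < ℓ := by
    intro ℓ hℓ
    rw [hS, Finset.mem_filter, Finset.mem_Ioc] at hℓ
    exact ⟨hℓ.2, hℓ.1.1⟩
  have expand : ∀ d : ℕ, ∏ ℓ ∈ S, (1 - (jacobiSym (-(d : ℤ)) ℓ : ℝ) / (ℓ : ℝ))
      = ∑ t ∈ S.powerset, ∏ ℓ ∈ t, (-((jacobiSym (-(d : ℤ)) ℓ : ℝ) / (ℓ : ℝ))) := by
    intro d
    calc ∏ ℓ ∈ S, (1 - (jacobiSym (-(d : ℤ)) ℓ : ℝ) / (ℓ : ℝ))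
        = ∏ ℓ ∈ S, ((-((jacobiSym (-(d : ℤ)) ℓ : ℝ) / (ℓ : ℝ))) + 1) :=
          Finset.prod_congr rfl fun ℓ _ => by ring
      _ = ∑ t ∈ S.powerset, (∏ ℓ ∈ t, (-((jacobiSym (-(d : ℤ)) ℓ : ℝ) / (ℓ : ℝ))))
            * ∏ _ℓ ∈ S \ t, (1 : ℝ) := Finset.prod_add _ _ _
      _ = _ := by simp
  have step1 : (∑ d ∈ Finset.Icc 1 N, ∏ ℓ ∈ S, (1 - (jacobiSym (-(d : ℤ)) ℓ : ℝ) / (ℓ : ℝ)))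
      = ∑ t ∈ S.powerset, ∑ d ∈ Finset.Icc 1 N,
          ∏ ℓ ∈ t, (-((jacobiSym (-(d : ℤ)) ℓ : ℝ) / (ℓ : ℝ))) := by
    rw [Finset.sum_congr rfl fun d _ => expand d]
    exact Finset.sum_comm
  -- bound for nonempty subsets
  have key : ∀ t ∈ S.powerset, t.Nonempty →
      |∑ d ∈ Finset.Icc 1 N, ∏ ℓ ∈ t, (-((jacobiSym (-(d : ℤ)) ℓ : ℝ) / (ℓ : ℝ)))| ≤ 1 := by
    intro t htp htne
    have htS : t ⊆ S := Finset.mem_powerset.mp htp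
    have htfacts : ∀ ℓ ∈ t, ℓ.Prime ∧ ℓ ≠ 2 := fun ℓ hℓ =>
      ⟨(hSfacts ℓ (htS hℓ)).1, by have := (hSfacts ℓ (htS hℓ)).2; omega⟩
    set mt := ∏ ℓ ∈ t, ℓ with hmt
    have hmt0 : mt ≠ 0 := (Finset.prod_pos fun ℓ hℓ => (htfacts ℓ hℓ).1.pos).ne'
    haveI : NeZero mt := ⟨hmt0⟩
    have hmtpos : (0 : ℝ) < (mt : ℝ) := by
      exact_mod_cast Nat.pos_of_ne_zero hmt0
    have prodform : ∀ d : ℕ, ∏ ℓ ∈ t, (-((jacobiSym (-(d : ℤ)) ℓ : ℝ) / (ℓ : ℝ)))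
        = ((-1) ^ t.card * (jacobiSym (-(d : ℤ)) mt : ℝ)) / (mt : ℝ) := by
      intro d
      have hcast : (∏ ℓ ∈ t, (jacobiSym (-(d : ℤ)) ℓ : ℝ)) = (jacobiSym (-(d : ℤ)) mt : ℝ) := by
        rw [hmt, jacobi_prod_right _ t fun ℓ hℓ => (htfacts ℓ hℓ).1.ne_zero]
        push_cast
        rfl
      calc ∏ ℓ ∈ t, (-((jacobiSym (-(d : ℤ)) ℓ : ℝ) / (ℓ : ℝ)))
          = ∏ ℓ ∈ t, ((-1) * ((jacobiSym (-(d : ℤ)) ℓ : ℝ) / (ℓ : ℝ))) :=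
            Finset.prod_congr rfl fun ℓ _ => by ring
        _ = (-1) ^ t.card * ∏ ℓ ∈ t, ((jacobiSym (-(d : ℤ)) ℓ : ℝ) / (ℓ : ℝ)) := by
            rw [Finset.prod_mul_distrib, Finset.prod_const]
        _ = (-1) ^ t.card * ((∏ ℓ ∈ t, (jacobiSym (-(d : ℤ)) ℓ : ℝ)) / ∏ ℓ ∈ t, (ℓ : ℝ)) := by
            rw [Finset.prod_div_distrib]
        _ = ((-1) ^ t.card * (jacobiSym (-(d : ℤ)) mt : ℝ)) / (mt : ℝ) := by
            rw [hcast, ← Nat.cast_prod]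
            ring
    have hz0 : ∑ x : ZMod mt, jacobiSym (x.val : ℤ) mt = 0 :=
      sum_jacobi_zmod htfacts htne hmt
    have hbound := jacobi_partial_bound hz0 N
    calc |∑ d ∈ Finset.Icc 1 N, ∏ ℓ ∈ t, (-((jacobiSym (-(d : ℤ)) ℓ : ℝ) / (ℓ : ℝ)))|
        = |((-1 : ℝ) ^ t.card * ((∑ d ∈ Finset.Icc 1 N, jacobiSym (-(d : ℤ)) mt : ℤ) : ℝ))
            / (mt : ℝ)| := by
          rw [Finset.sum_congr rfl fun d _ => prodform d, ← Finset.sum_div,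
            ← Finset.mul_sum]
          push_cast
          ring_nf
      _ = |((∑ d ∈ Finset.Icc 1 N, jacobiSym (-(d : ℤ)) mt : ℤ) : ℝ)| / (mt : ℝ) := by
          rw [abs_div, abs_mul, abs_pow, abs_neg, abs_one, one_pow, one_mul,
            abs_of_pos hmtpos]
      _ ≤ (mt : ℝ) / (mt : ℝ) := by
          gcongr
          exact_mod_cast hbound
      _ = 1 := div_self hmtpos.ne'
  -- assemble
  have hempty : (∑ d ∈ Finset.Icc 1 N,
      ∏ ℓ ∈ (∅ : Finset ℕ), (-((jacobiSym (-(d : ℤ)) ℓ : ℝ) / (ℓ : ℝ)))) = (N : ℝ) := by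
    simp
  have hπ : S.card ≤ Nat.primeCounting n := by
    have hcount : Nat.primeCounting n = ((Finset.range (n + 1)).filter Nat.Prime).card := by
      rw [show Nat.primeCounting n = Nat.count Nat.Prime (n + 1) from rfl,
        Nat.count_eq_card_filter_range]
    rw [hcount]
    apply Finset.card_le_card
    intro x hx
    rw [hS, Finset.mem_filter, Finset.mem_Ioc] at hx
    rw [Finset.mem_filter, Finset.mem_range]
    exact ⟨by omega, hx.2⟩
  rw [step1, ← Finset.add_sum_erase S.powerset _ (Finset.empty_mem_powerset S), hempty, one_mul]
  have h1 : (N : ℝ) ≤ D := Nat.floor_le (by linarith)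
  have h2 : (∑ t ∈ (S.powerset).erase ∅, ∑ d ∈ Finset.Icc 1 N,
      ∏ ℓ ∈ t, (-((jacobiSym (-(d : ℤ)) ℓ : ℝ) / (ℓ : ℝ)))) ≤ 2 ^ (Nat.primeCounting n) := by
    calc (∑ t ∈ (S.powerset).erase ∅, ∑ d ∈ Finset.Icc 1 N,
        ∏ ℓ ∈ t, (-((jacobiSym (-(d : ℤ)) ℓ : ℝ) / (ℓ : ℝ))))
        ≤ ∑ _t ∈ (S.powerset).erase ∅, (1 : ℝ) := by
          apply Finset.sum_le_sum
          intro t ht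
          rw [Finset.mem_erase] at ht
          exact le_of_abs_le (key t ht.2 (Finset.nonempty_iff_ne_empty.mpr ht.1))
      _ = ((S.powerset).erase ∅).card := by simp
      _ ≤ ((2 : ℕ) ^ S.card : ℝ) := by
          have hcard : (S.powerset.erase ∅).card ≤ 2 ^ S.card := by
            rw [← Finset.card_powerset]
            exact Finset.card_erase_le
          exact_mod_cast hcard
      _ ≤ 2 ^ (Nat.primeCounting n) := by
          have : (2 : ℕ) ^ S.card ≤ (2 : ℕ) ^ Nat.primeCounting n :=
            Nat.pow_le_pow_right (by norm_num) hπ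
          exact_mod_cast this
  linarith
end
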